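/- If X is a Lindelöf regular space, then the tightness of the G_δ-modification of X is at most 2^{t(X)}, where t(X) is the tightness of X. -/
import Mathlib


open Cardinal Set Topology

universe u

/-- A free sequence of length `o` in the topology `t`: a transfinite sequence indexed by
the ordinals below `o` such that every initial segment's closure is disjoint from the
closure of the corresponding final segment. -/
def IsFreeSeqOn {X : Type u} (t : TopologicalSpace X) (o : Ordinal.{u})
    (x : {α : Ordinal.{u} // α < o} → X) : Prop :=
  ∀ i : {α : Ordinal.{u} // α < o},
    @closure X t (x '' {j | j < i}) ∩ @closure X t (x '' {j | i ≤ j}) = ∅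

/-- The tightness of a topology: the least infinite cardinal `κ` such that whenever a
point is in the closure of a set `A`, it is in the closure of a subset of `A` of
cardinality at most `κ`. -/
noncomputable def tightnessOf {X : Type u} (t : TopologicalSpace X) : Cardinal.{u} :=
  sInf {κ : Cardinal.{u} | ℵ₀ ≤ κ ∧ ∀ (A : Set X) (p : X), p ∈ @closure X t A →
    ∃ B ⊆ A, #↥B ≤ κ ∧ p ∈ @closure X t B}

/-- The Lindelöf number: the least infinite cardinal `κ` such that every open cover has
a subcover of cardinality at most `κ`. -/
noncomputable def lindelofNumberOf {X : Type u} (t : TopologicalSpace X) : Cardinal.{u} :=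
  sInf {κ : Cardinal.{u} | ℵ₀ ≤ κ ∧ ∀ 𝒰 : Set (Set X), (∀ U ∈ 𝒰, @IsOpen X t U) →
    ⋃₀ 𝒰 = Set.univ → ∃ 𝒱 ⊆ 𝒰, #↥𝒱 ≤ κ ∧ ⋃₀ 𝒱 = Set.univ}

/-- `F(X)`: the supremum of the cardinalities (lengths) of free sequences, at least ℵ₀. -/
noncomputable def freeNumberOf {X : Type u} (t : TopologicalSpace X) : Cardinal.{u} :=
  ℵ₀ ⊔ sSup {c : Cardinal.{u} |
    ∃ x : {α : Ordinal.{u} // α < c.ord} → X, IsFreeSeqOn t c.ord x}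

/-- The G_δ-modification: the topology generated by the G_δ-subsets. -/
def gDelta {X : Type u} (t : TopologicalSpace X) : TopologicalSpace X :=
  TopologicalSpace.generateFrom {s : Set X | @IsGδ X t s}

/-- `Cl_κ`-Lindelöf: every open `Cl_κ`-cover of any subset `W` contains a countable
subfamily covering `W`. -/
def ClLindelofOf {X : Type u} (t : TopologicalSpace X) (κ : Cardinal.{u}) : Prop :=
  ∀ (W : Set X) (𝒰 : Set (Set X)), (∀ U ∈ 𝒰, @IsOpen X t U) →
    (∀ C ⊆ W, #↥C ≤ κ → ∃ U ∈ 𝒰, @closure X t C ⊆ U) →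
    ∃ 𝒱 ⊆ 𝒰, 𝒱.Countable ∧ W ⊆ ⋃₀ 𝒱

lemma mem_closure_iff'' {Y : Type u} {τ : TopologicalSpace Y} {s : Set Y} {x : Y} :
    x ∈ @closure Y τ s ↔ ∀ o, IsOpen[τ] o → x ∈ o → (o ∩ s).Nonempty := by
  letI := τ; exact mem_closure_iff

section Aux
variable {X : Type u} [tX : TopologicalSpace X]

lemma notMem_closure_compl {p : X} {K : Set X} (hK : K ∈ nhds p) : p ∉ closure Kᶜ := by
  intro h
  rcases mem_closure_iff.1 h _ isOpen_interior (mem_interior_iff_mem_nhds.2 hK) with ⟨x, hx1, hx2⟩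
  exact hx2 (interior_subset hx1)

lemma gdelta_basis {O : Set X} (hO : TopologicalSpace.GenerateOpen {s : Set X | IsGδ s} O) :
    ∀ p ∈ O, ∃ G, IsGδ G ∧ p ∈ G ∧ G ⊆ O := by
  induction hO with
  | basic s hs => exact fun p hp => ⟨s, hs, hp, subset_rfl⟩
  | univ => exact fun p _ => ⟨univ, IsGδ.univ, mem_univ p, subset_rfl⟩
  | inter s t _ _ ihs iht =>
      intro p hp
      obtain ⟨G1, h1, hp1, hs1⟩ := ihs p hp.1
      obtain ⟨G2, h2, hp2, hs2⟩ := iht p hp.2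
      exact ⟨G1 ∩ G2, h1.inter h2, ⟨hp1, hp2⟩, inter_subset_inter hs1 hs2⟩
  | sUnion Sf _ ih =>
      intro p hp
      obtain ⟨s, hsS, hps⟩ := hp
      obtain ⟨G, hG, hpG, hGs⟩ := ih s hsS p hps
      exact ⟨G, hG, hpG, hGs.trans (subset_sUnion_of_mem hsS)⟩

lemma L1 {p : X} {D : Set X} (V : ℕ → Set X)
    (hV : ∀ n, IsOpen (V n) ∧ p ∉ closure (V n)) (hD : D ⊆ ⋃ n, V n) :
    p ∉ @closure X (gDelta tX) D := by
  intro hp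
  have hG : IsGδ (⋂ n, (closure (V n))ᶜ) :=
    IsGδ.iInter fun n => (isClosed_closure.isOpen_compl).isGδ
  have hopen : IsOpen[gDelta tX] (⋂ n, (closure (V n))ᶜ) :=
    TopologicalSpace.GenerateOpen.basic _ hG
  have hpG : p ∈ ⋂ n, (closure (V n))ᶜ := mem_iInter.2 fun n => (hV n).2
  rcases mem_closure_iff''.1 hp _ hopen hpG with ⟨x, hxG, hxD⟩
  rcases mem_iUnion.1 (hD hxD) with ⟨n, hn⟩
  exact (mem_iInter.1 hxG n) (subset_closure hn)

variable [T3Space X]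

lemma L2 {p : X} {D : Set X} (h : p ∉ @closure X (gDelta tX) D) :
    ∃ V : ℕ → Set X, (∀ n, IsOpen (V n) ∧ p ∉ closure (V n)) ∧ D ⊆ ⋃ n, V n := by
  rw [mem_closure_iff''] at h
  push_neg at h
  obtain ⟨O, hO, hpO, hOD⟩ := h
  obtain ⟨G, hGδ, hpG, hGO⟩ := gdelta_basis hO p hpO
  obtain ⟨Tset, hTopen, hTct, rfl⟩ := hGδ
  obtain ⟨U, hU⟩ := (hTct.insert Set.univ).exists_eq_range ⟨Set.univ, mem_insert _ _⟩
  have hUn : ∀ n, IsOpen (U n) ∧ p ∈ U n := by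
    intro n
    have hmem : U n ∈ insert Set.univ Tset := by rw [hU]; exact mem_range_self n
    rcases mem_insert_iff.1 hmem with h' | h'
    · rw [h']; exact ⟨isOpen_univ, mem_univ p⟩
    · exact ⟨hTopen _ h', hpG _ h'⟩
  choose K hKnhds hKcl hKsub using fun n =>
    exists_mem_nhds_isClosed_subset ((hUn n).1.mem_nhds (hUn n).2)
  refine ⟨fun n => (K n)ᶜ, fun n => ⟨(hKcl n).isOpen_compl, notMem_closure_compl (hKnhds n)⟩, ?_⟩
  intro x hxD
  have hxG : x ∉ ⋂₀ Tset := by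
    intro hx
    have : x ∈ O ∩ D := ⟨hGO hx, hxD⟩
    rw [hOD] at this
    exact this
  simp only [mem_sInter, not_forall] at hxG
  obtain ⟨t, htT, hxt⟩ := hxG
  have : t ∈ range U := by rw [← hU]; exact mem_insert_of_mem _ htT
  obtain ⟨n, rfl⟩ := this
  exact mem_iUnion.2 ⟨n, fun hxK => hxt (hKsub n hxK)⟩

lemma exists_Vc (p : X) : ∃ V : Set X → Set X, ∀ C,
    IsOpen (V C) ∧ closure C ⊆ V C ∧ (p ∉ closure C → p ∉ closure (V C)) := by
  have key : ∀ C : Set X, ∃ v : Set X,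
      IsOpen v ∧ closure C ⊆ v ∧ (p ∉ closure C → p ∉ closure v) := by
    intro C
    by_cases hp : p ∈ closure C
    · exact ⟨univ, isOpen_univ, subset_univ _, fun h => absurd hp h⟩
    · have h1 : (closure C)ᶜ ∈ nhds p := (isClosed_closure.isOpen_compl).mem_nhds hp
      obtain ⟨K, hKnhds, hKcl, hKsub⟩ := exists_mem_nhds_isClosed_subset h1
      exact ⟨Kᶜ, hKcl.isOpen_compl, subset_compl_comm.mp hKsub,
        fun _ => notMem_closure_compl hKnhds⟩
  choose V hV using key
  exact ⟨V, hV⟩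

end Aux
section Aux2
variable {X : Type u} [tX : TopologicalSpace X] [T3Space X] [LindelofSpace X]

lemma L3 {κ : Cardinal.{u}} {p : X}
    (ht : ∀ (A : Set X) (q : X), q ∈ closure A → ∃ B ⊆ A, #↥B ≤ κ ∧ q ∈ closure B)
    (V : Set X → Set X)
    (hV : ∀ C, IsOpen (V C) ∧ closure C ⊆ V C ∧ (p ∉ closure C → p ∉ closure (V C)))
    (S : Set X) (hsmall : ∀ C ⊆ S, #↥C ≤ κ → p ∉ closure C) :
    ∃ g : ℕ → Set X, (∀ k, g k ⊆ S ∧ #↥(g k) ≤ κ ∧ p ∉ closure (g k)) ∧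
      S ⊆ ⋃ k, V (g k) := by
  have hLin : IsLindelof (closure S) := isClosed_closure.isLindelof
  have hcover : closure S ⊆ ⋃ C : {C : Set X // C ⊆ S ∧ #↥C ≤ κ}, V C.1 := by
    intro x hx
    obtain ⟨C, hCS, hCκ, hxC⟩ := ht S x hx
    exact mem_iUnion.2 ⟨⟨C, hCS, hCκ⟩, (hV C).2.1 hxC⟩
  obtain ⟨r, hrc, hrcov⟩ := hLin.elim_countable_subcover
    (fun C : {C : Set X // C ⊆ S ∧ #↥C ≤ κ} => V C.1) (fun C => (hV C.1).1) hcover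
  rcases r.eq_empty_or_nonempty with hre | hrne
  · have hS : S = ∅ := by
      have := (subset_closure.trans hrcov)
      rw [hre] at this
      simpa using subset_empty_iff.1 (by simpa using this)
    refine ⟨fun _ => ∅, fun k => ⟨empty_subset _, ?_, by simp [closure_empty]⟩, by simp [hS]⟩
    simp
  · obtain ⟨φ, hφ⟩ := hrc.exists_eq_range hrne
    refine ⟨fun k => (φ k).val, fun k =>
      ⟨(φ k).prop.1, (φ k).prop.2, hsmall _ (φ k).prop.1 (φ k).prop.2⟩, ?_⟩
    intro x hx
    have hx2 := hrcov (subset_closure hx)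
    rw [hφ] at hx2
    simp only [mem_iUnion] at hx2 ⊢
    obtain ⟨C, ⟨k, rfl⟩, hxk⟩ := hx2
    exact ⟨k, hxk⟩
end Aux2
section Main
variable {X : Type u} [tX : TopologicalSpace X] [T3Space X] [LindelofSpace X]

theorem main_step {κ : Cardinal.{u}} (hκ : ℵ₀ ≤ κ)
    (ht : ∀ (A : Set X) (q : X), q ∈ closure A → ∃ B ⊆ A, #↥B ≤ κ ∧ q ∈ closure B)
    (A : Set X) (p : X) (hp : p ∈ @closure X (gDelta tX) A) :
    ∃ B ⊆ A, #↥B ≤ 2 ^ κ ∧ p ∈ @closure X (gDelta tX) B := by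
  classical
  obtain ⟨V, hV⟩ := exists_Vc (X := X) p
  have h2κ : ℵ₀ ≤ 2 ^ κ := hκ.trans (cantor κ).le
  set adm : (ℕ → Set X) → Prop :=
    fun f => ∀ m : ℕ, f m ⊆ A ∧ #↥(f m) ≤ κ ∧ p ∉ closure (f m) with hadm
  -- witness function
  have key : ∀ f : ℕ → Set X, adm f → ∃ a ∈ A, ∀ m, a ∉ V (f m) := by
    intro f hf
    by_contra hcon
    push_neg at hcon
    have hsub : A ⊆ ⋃ m, V (f m) := fun a ha => mem_iUnion.2 (hcon a ha)
    exact L1 (fun m => V (f m))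
      (fun m => ⟨(hV (f m)).1, (hV (f m)).2.2 (hf m).2.2⟩) hsub hp
  let Fw : (ℕ → Set X) → X := fun f => if hf : adm f then (key f hf).choose else p
  have hFwA : ∀ f, adm f → Fw f ∈ A ∧ ∀ m, Fw f ∉ V (f m) := by
    intro f hf
    have h1 := (key f hf).choose_spec
    simp only [Fw, dif_pos hf]
    exact ⟨h1.1, h1.2⟩
  -- the index type
  set γ : Ordinal.{u} := (Order.succ κ).ord with hγ
  let T : Type u := γ.ToType
  haveI hIWO : IsWellOrder T ((· < ·) : T → T → Prop) := isWellOrder_lt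
  have hwf : WellFounded ((· < ·) : T → T → Prop) := hIWO.wf
  let tyin : T → Ordinal.{u} := fun x =>
    Ordinal.typein ((· < ·) : T → T → Prop) x
  let Fstep : ∀ i : T, (∀ j, j < i → Set X) → Set X := fun i ih =>
    Fw '' {f : ℕ → Set X | adm f ∧ ∀ m : ℕ, ∃ j, ∃ h : j < i, f m ⊆ ih j h}
  let S : T → Set X := fun i => hwf.fix Fstep i
  have hSeq : ∀ i, S i =
      Fw '' {f : ℕ → Set X | adm f ∧ ∀ m : ℕ, ∃ j, ∃ _ : j < i, f m ⊆ S j} :=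
    fun i => WellFounded.fix_eq hwf Fstep i
  have hmono : ∀ i j : T, i ≤ j → S i ⊆ S j := by
    intro i j hij x hx
    rw [hSeq] at hx ⊢
    obtain ⟨f, ⟨hf1, hf2⟩, rfl⟩ := hx
    refine ⟨f, ⟨hf1, fun m => ?_⟩, rfl⟩
    obtain ⟨k, hk, hsub⟩ := hf2 m
    exact ⟨k, lt_of_lt_of_le hk hij, hsub⟩
  set B : Set X := ⋃ i, S i with hB
  have hBA : B ⊆ A := by
    refine iUnion_subset fun i => ?_
    rw [hSeq]
    rintro x ⟨f, ⟨hf, _⟩, rfl⟩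
    exact (hFwA f hf).1
  -- boundedness of κ-sized subsets of T
  have hbound : ∀ s : Set T, #↥s ≤ κ → ∃ t : T, ∀ x ∈ s, x < t := by
    intro s hs
    have hcof : #↥s < γ.cof := by
      rw [hγ, (isRegular_succ hκ).cof_eq]
      exact hs.trans_lt (Order.lt_succ κ)
    have hlt : ∀ x : s, tyin x.1 + 1 < γ := by
      intro x
      rw [Ordinal.add_one_eq_succ]
      exact (Cardinal.isSuccLimit_ord (hκ.trans (Order.le_succ κ))).succ_lt
        (by rw [hγ] at *; exact Ordinal.typein_lt_self x.1)
    have hsup : (⨆ x : s, (tyin x.1 + 1)) < γ :=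
      Ordinal.iSup_lt_ord hcof hlt
    have hsup' : (⨆ x : s, (tyin x.1 + 1)) <
        Ordinal.type ((· < ·) : T → T → Prop) := by
      rwa [Ordinal.type_toType]
    refine ⟨Ordinal.enum (· < ·) ⟨_, hsup'⟩, fun x hx => ?_⟩
    have h1 : tyin x < tyin (Ordinal.enum (· < ·) ⟨_, hsup'⟩) := by
      show _ < Ordinal.typein _ _
      rw [Ordinal.typein_enum]
      refine lt_of_lt_of_le ?_ (Ordinal.le_iSup _ (⟨x, hx⟩ : s))
      rw [Ordinal.add_one_eq_succ]
      exact Order.lt_succ _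
    exact (Ordinal.typein_lt_typein (· < ·)).1 h1
  -- closure property of B
  have hclose : ∀ f : ℕ → Set X, adm f → (∀ m, f m ⊆ B) → Fw f ∈ B := by
    intro f hf hfB
    have h1 : ∀ m : ℕ, ∃ j : T, f m ⊆ S j := by
      intro m
      have hx : ∀ x : ↥(f m), ∃ i : T, (x : X) ∈ S i := fun x => mem_iUnion.1 (hfB m x.2)
      choose r hr using hx
      obtain ⟨t, htt⟩ := hbound (range r) (mk_range_le.trans (hf m).2.1)
      exact ⟨t, fun x hxm =>
        hmono _ _ (le_of_lt (htt _ (mem_range_self ⟨x, hxm⟩))) (hr ⟨x, hxm⟩)⟩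
    choose j hj using h1
    haveI : Countable ↥(range j) := (countable_range j).to_subtype
    have hcj : #↥(range j) ≤ κ := mk_le_aleph0.trans hκ
    obtain ⟨t, ht'⟩ := hbound (range j) hcj
    refine mem_iUnion.2 ⟨t, ?_⟩
    rw [hSeq]
    exact ⟨f, ⟨hf, fun m => ⟨j m, ht' _ (mem_range_self m), hj m⟩⟩, rfl⟩
  -- cardinality bounds
  have hTcard : #T = Order.succ κ := by
    show #γ.ToType = _
    rw [mk_toType, hγ, card_ord]
  have hTle : #T ≤ 2 ^ κ := by rw [hTcard]; exact Order.succ_le_of_lt (cantor κ)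
  have hScard : ∀ i : T, #↥(S i) ≤ 2 ^ κ := by
    intro i
    refine hwf.induction (C := fun i => #↥(S i) ≤ 2 ^ κ) i ?_
    intro i IH
    rw [hSeq]
    set U : Set X := ⋃ j : ↥(Iio i), S j.1 with hU
    have hUcard : #↥U ≤ 2 ^ κ := by
      refine le_trans mk_iUnion_le_sum_mk ?_
      refine le_trans (sum_le_sum _ _ fun j => IH j.1 j.2) ?_
      rw [sum_const']
      calc #↥(Iio i) * 2 ^ κ ≤ 2 ^ κ * 2 ^ κ :=
            mul_le_mul' ((mk_set_le _).trans hTle) le_rfl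
        _ = 2 ^ κ := mul_eq_self h2κ
    set SC := {C : Set X // C ⊆ U ∧ #↥C ≤ κ} with hSC
    have hSCcard : #SC ≤ 2 ^ κ := by
      refine le_trans (mk_bounded_subset_le U κ) ?_
      calc (max #↥U ℵ₀) ^ κ ≤ (2 ^ κ) ^ κ := power_le_power_right (max_le hUcard h2κ)
        _ = 2 ^ (κ * κ) := (power_mul).symm
        _ = 2 ^ κ := by rw [mul_eq_self hκ]
    set G : Set (ℕ → Set X) :=
      {f : ℕ → Set X | adm f ∧ ∀ m : ℕ, ∃ j, ∃ _ : j < i, f m ⊆ S j} with hG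
    have hmemG : ∀ g : ↥G, ∀ m : ℕ, g.1 m ⊆ U ∧ #↥(g.1 m) ≤ κ := by
      rintro ⟨f, hf1, hf2⟩ m
      obtain ⟨k, hk, hsub⟩ := hf2 m
      exact ⟨hsub.trans (subset_iUnion (fun j : ↥(Iio i) => S j.1) ⟨k, hk⟩), (hf1 m).2.1⟩
    have hGcard : #↥G ≤ #(ℕ → SC) := by
      refine mk_le_of_injective
        (f := fun g : ↥G => fun m : ℕ => (⟨g.1 m, (hmemG g m).1, (hmemG g m).2⟩ : SC)) ?_
      intro g₁ g₂ h
      apply Subtype.ext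
      funext m
      exact congrArg Subtype.val (congrFun h m)
    have harrow : #(ℕ → SC) ≤ 2 ^ κ := by
      have h1 : #(ℕ → SC) = #SC ^ (ℵ₀ : Cardinal.{u}) := by
        rw [mk_arrow]; simp
      rw [h1]
      calc #SC ^ (ℵ₀ : Cardinal.{u}) ≤ (2 ^ κ) ^ (ℵ₀ : Cardinal.{u}) :=
            power_le_power_right hSCcard
        _ = 2 ^ (κ * ℵ₀) := (power_mul).symm
        _ = 2 ^ κ := by rw [mul_eq_left hκ hκ aleph0_ne_zero]
    exact le_trans mk_image_le (hGcard.trans harrow)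
  have hBcard : #↥B ≤ 2 ^ κ := by
    rw [hB]
    refine le_trans mk_iUnion_le_sum_mk ?_
    refine le_trans (sum_le_sum _ _ fun i => hScard i) ?_
    rw [sum_const']
    calc #T * 2 ^ κ ≤ 2 ^ κ * 2 ^ κ := mul_le_mul' hTle le_rfl
      _ = 2 ^ κ := mul_eq_self h2κ
  -- p is in the Gδ-closure of B
  have hfinal : p ∈ @closure X (gDelta tX) B := by
    by_contra hnot
    obtain ⟨V', hV', hBV'⟩ := L2 hnot
    have hLn : ∀ n : ℕ, ∃ g : ℕ → Set X,
        (∀ k, g k ⊆ B ∩ V' n ∧ #↥(g k) ≤ κ ∧ p ∉ closure (g k)) ∧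
        B ∩ V' n ⊆ ⋃ k, V (g k) := by
      intro n
      refine L3 ht V hV (B ∩ V' n) ?_
      intro C hC hCκ hclC
      exact (hV' n).2 (closure_mono (hC.trans inter_subset_right) hclC)
    choose g hg1 hg2 using hLn
    let e : ℕ × ℕ ≃ ℕ := Denumerable.eqv (ℕ × ℕ)
    set f : ℕ → Set X := fun m => g (e.symm m).1 (e.symm m).2 with hf
    have hadmf : adm f := by
      intro m
      obtain ⟨h1, h2, h3⟩ := hg1 (e.symm m).1 (e.symm m).2
      exact ⟨(h1.trans inter_subset_left).trans hBA, h2, h3⟩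
    have hfB : ∀ m, f m ⊆ B :=
      fun m => ((hg1 (e.symm m).1 (e.symm m).2).1).trans inter_subset_left
    have hmem : Fw f ∈ B := hclose f hadmf hfB
    have hnotmem : ∀ m, Fw f ∉ V (f m) := (hFwA f hadmf).2
    obtain ⟨n, hn⟩ := mem_iUnion.1 (hBV' hmem)
    obtain ⟨k, hk⟩ := mem_iUnion.1 (hg2 n ⟨hmem, hn⟩)
    have : Fw f ∈ V (f (e (n, k))) := by
      rw [hf]
      simpa using hk
    exact hnotmem _ this
  exact ⟨B, hBA, hBcard, hfinal⟩

end Main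

/-- if `X` is Lindelöf regular, then `t(X_δ) ≤ 2^{t(X)}`. -/
theorem statement4 {X : Type u} [tX : TopologicalSpace X] [T3Space X] [LindelofSpace X] :
    tightnessOf (gDelta tX) ≤ 2 ^ tightnessOf tX := by
  have hne : ({κ' : Cardinal.{u} | ℵ₀ ≤ κ' ∧ ∀ (A : Set X) (p : X), p ∈ closure A →
      ∃ B ⊆ A, #↥B ≤ κ' ∧ p ∈ closure B}).Nonempty :=
    ⟨max #X ℵ₀, le_max_right _ _,
      fun A p hp => ⟨A, subset_rfl, (mk_set_le A).trans (le_max_left _ _), hp⟩⟩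
  have hmem : tightnessOf tX ∈ {κ' : Cardinal.{u} | ℵ₀ ≤ κ' ∧
      ∀ (A : Set X) (p : X), p ∈ closure A → ∃ B ⊆ A, #↥B ≤ κ' ∧ p ∈ closure B} :=
    csInf_mem hne
  obtain ⟨hκ0, ht⟩ := hmem
  exact csInf_le' ⟨hκ0.trans (cantor _).le, fun A p hp => main_step hκ0 ht A p hp⟩
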